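/- Define a 6-dimensional bracket by the nonzero structure constants C⁶₃₆ = −2, C¹₁₃ = −2, C⁴₃₄ = C²₂₃ = C⁴₁₂ = 1, C³₁₆ = 1, C²₄₆ = −1, C²₂₅ = α, C⁴₄₅ = α (α ≠ 0), where [e_a,e_b] = C^c_{ab}e_c extended antisymmetrically. Then this satisfies the Jacobi identity and defines a Lie algebra with Levi decomposition sl(2,ℝ) ⋉ s_{3,1,a=1}: span{e₁,e₃,e₆} is a subalgebra isomorphic to sl(2,ℝ) and span{e₂,e₄,e₅} is a solvable ideal. -/

import Mathlib

private lemma bil_span_aux {V : Type*} [AddCommGroup V] [Module ℝ V]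
    (μ : V →ₗ[ℝ] V →ₗ[ℝ] V) (s t : Set V) (P : Submodule ℝ V)
    (h : ∀ x ∈ s, ∀ y ∈ t, μ x y ∈ P) :
    ∀ x ∈ Submodule.span ℝ s, ∀ y ∈ Submodule.span ℝ t, μ x y ∈ P := by
  have inner : ∀ x ∈ s, ∀ y ∈ Submodule.span ℝ t, μ x y ∈ P := by
    intro x hx y hy
    induction hy using Submodule.span_induction with
    | mem y hyt => exact h x hx y hyt
    | zero => simp
    | add u v _ _ hu hv => rw [map_add]; exact P.add_mem hu hv
    | smul c u _ hu => rw [map_smul]; exact P.smul_mem c hu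
  intro x hx y hy
  induction hx using Submodule.span_induction with
  | mem x hxs => exact inner x hxs y hy
  | zero => simp
  | add u v _ _ hu hv =>
      rw [map_add, LinearMap.add_apply]; exact P.add_mem hu hv
  | smul c u _ hu =>
      rw [map_smul, LinearMap.smul_apply]; exact P.smul_mem c hu

set_option maxHeartbeats 1000000 in
/-- The 6-dimensional bracket (with `b 0 = e₁`, …, `b 5 = e₆`) given
by the nonzero structure constants `C⁶₃₆ = −2, C¹₁₃ = −2, C⁴₃₄ = C²₂₃ = C⁴₁₂ = 1,
C³₁₆ = 1, C²₄₆ = −1, C²₂₅ = α, C⁴₄₅ = α` (α ≠ 0), i.e.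
`⁅e₃,e₆⁆ = −2e₆`, `⁅e₁,e₃⁆ = −2e₁`, `⁅e₃,e₄⁆ = e₄`, `⁅e₂,e₃⁆ = e₂`, `⁅e₁,e₂⁆ = e₄`,
`⁅e₁,e₆⁆ = e₃`, `⁅e₄,e₆⁆ = −e₂`, `⁅e₂,e₅⁆ = α e₂`, `⁅e₄,e₅⁆ = α e₄` (all others zero,
extended antisymmetrically), satisfies the Jacobi identity and defines a Lie algebra
with Levi decomposition `sl(2,ℝ) ⋉ s₃,₁ (a=1)`: `span{e₁,e₃,e₆}` is a subalgebra
isomorphic to `sl(2,ℝ)` (it carries a spanning `sl₂`-triple), and `span{e₂,e₄,e₅}` is a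
solvable ideal. -/
theorem sl2R_semidirect_s31
    (V : Type*) [AddCommGroup V] [Module ℝ V]
    (b : Module.Basis (Fin 6) ℝ V)
    (μ : V →ₗ[ℝ] V →ₗ[ℝ] V)
    (halt : ∀ x y : V, μ x y = - μ y x)
    (α : ℝ) (hα : α ≠ 0)
    (h36 : μ (b 2) (b 5) = (-2 : ℝ) • b 5)
    (h13 : μ (b 0) (b 2) = (-2 : ℝ) • b 0)
    (h34 : μ (b 2) (b 3) = b 3)
    (h23 : μ (b 1) (b 2) = b 1)
    (h12 : μ (b 0) (b 1) = b 3)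
    (h16 : μ (b 0) (b 5) = b 2)
    (h46 : μ (b 3) (b 5) = (-1 : ℝ) • b 1)
    (h25 : μ (b 1) (b 4) = α • b 1)
    (h45 : μ (b 3) (b 4) = α • b 3)
    (h14 : μ (b 0) (b 3) = 0)
    (h15 : μ (b 0) (b 4) = 0)
    (h24 : μ (b 1) (b 3) = 0)
    (h26 : μ (b 1) (b 5) = 0)
    (h35 : μ (b 2) (b 4) = 0)
    (h56 : μ (b 4) (b 5) = 0) :
    (∀ x y z : V, μ x (μ y z) + μ y (μ z x) + μ z (μ x y) = 0) ∧
    (∀ x ∈ Submodule.span ℝ {b 0, b 2, b 5}, ∀ y ∈ Submodule.span ℝ {b 0, b 2, b 5},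
      μ x y ∈ Submodule.span ℝ {b 0, b 2, b 5}) ∧
    (∃ E H F : V, Submodule.span ℝ {E, H, F} = Submodule.span ℝ {b 0, b 2, b 5} ∧
      μ H E = (2 : ℝ) • E ∧ μ H F = (-2 : ℝ) • F ∧ μ E F = H) ∧
    (∀ x : V, ∀ y ∈ Submodule.span ℝ {b 1, b 3, b 4},
      μ x y ∈ Submodule.span ℝ {b 1, b 3, b 4}) ∧
    (∀ x1 ∈ Submodule.span ℝ {b 1, b 3, b 4}, ∀ x2 ∈ Submodule.span ℝ {b 1, b 3, b 4},
      ∀ x3 ∈ Submodule.span ℝ {b 1, b 3, b 4}, ∀ x4 ∈ Submodule.span ℝ {b 1, b 3, b 4},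
      μ (μ x1 x2) (μ x3 x4) = 0) := by
  -- the diagonal vanishes
  have hdiag : ∀ x : V, μ x x = 0 := by
    intro x
    have h2 : μ x x + μ x x = 0 := by nth_rewrite 1 [halt x x]; simp
    have h3 : (2 : ℝ) • μ x x = 0 := by rw [two_smul]; exact h2
    rcases smul_eq_zero.mp h3 with h | h
    · norm_num at h
    · exact h
  -- reversed table entries
  have t10 : μ (b 1) (b 0) = -(b 3) := by rw [halt, h12]
  have t20 : μ (b 2) (b 0) = -((-2 : ℝ) • b 0) := by rw [halt, h13]
  have t30 : μ (b 3) (b 0) = 0 := by rw [halt, h14, neg_zero]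
  have t40 : μ (b 4) (b 0) = 0 := by rw [halt, h15, neg_zero]
  have t50 : μ (b 5) (b 0) = -(b 2) := by rw [halt, h16]
  have t21 : μ (b 2) (b 1) = -(b 1) := by rw [halt, h23]
  have t31 : μ (b 3) (b 1) = 0 := by rw [halt, h24, neg_zero]
  have t41 : μ (b 4) (b 1) = -(α • b 1) := by rw [halt, h25]
  have t51 : μ (b 5) (b 1) = 0 := by rw [halt, h26, neg_zero]
  have t32 : μ (b 3) (b 2) = -(b 3) := by rw [halt, h34]
  have t42 : μ (b 4) (b 2) = 0 := by rw [halt, h35, neg_zero]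
  have t52 : μ (b 5) (b 2) = -((-2 : ℝ) • b 5) := by rw [halt, h36]
  have t43 : μ (b 4) (b 3) = -(α • b 3) := by rw [halt, h45]
  have t53 : μ (b 5) (b 3) = -((-1 : ℝ) • b 1) := by rw [halt, h46]
  have t54 : μ (b 5) (b 4) = 0 := by rw [halt, h56, neg_zero]
  have d0 := hdiag (b 0); have d1 := hdiag (b 1); have d2 := hdiag (b 2)
  have d3 := hdiag (b 3); have d4 := hdiag (b 4); have d5 := hdiag (b 5)
  -- Jacobi identity on basis vectors
  have base : ∀ i j k : Fin 6,
      μ (b i) (μ (b j) (b k)) + μ (b j) (μ (b k) (b i)) + μ (b k) (μ (b i) (b j)) = 0 := by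
    intro i j k
    fin_cases i <;> fin_cases j <;> fin_cases k <;>
      simp only [Fin.reduceFinMk, Fin.isValue, h12, h13, h14, h15, h16, h23, h24, h25, h26, h34, h35, h36,
        h45, h46, h56, t10, t20, t30, t40, t50, t21, t31, t41, t51, t32, t42, t52, t43,
        t53, t54, d0, d1, d2, d3, d4, d5, map_smul, map_neg, map_zero, smul_neg, neg_neg,
        smul_smul, smul_zero, neg_zero, add_zero, zero_add] <;>
      module
  -- extend the Jacobi identity by linearity, one variable at a time
  have stepz : ∀ i j : Fin 6, ∀ z : V,
      μ (b i) (μ (b j) z) + μ (b j) (μ z (b i)) + μ z (μ (b i) (b j)) = 0 := by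
    intro i j z
    have hmap : (μ (b i) ∘ₗ μ (b j) + μ (b j) ∘ₗ μ.flip (b i)
        + μ.flip (μ (b i) (b j)) : V →ₗ[ℝ] V) = 0 := by
      apply b.ext
      intro k
      simpa [LinearMap.add_apply, LinearMap.comp_apply, LinearMap.flip_apply] using base i j k
    simpa [LinearMap.add_apply, LinearMap.comp_apply, LinearMap.flip_apply] using
      LinearMap.congr_fun hmap z
  have stepy : ∀ i : Fin 6, ∀ y z : V,
      μ (b i) (μ y z) + μ y (μ z (b i)) + μ z (μ (b i) y) = 0 := by
    intro i y z
    have hmap : (μ (b i) ∘ₗ μ.flip z + μ.flip (μ z (b i))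
        + μ z ∘ₗ μ (b i) : V →ₗ[ℝ] V) = 0 := by
      apply b.ext
      intro j
      simpa [LinearMap.add_apply, LinearMap.comp_apply, LinearMap.flip_apply] using stepz i j z
    simpa [LinearMap.add_apply, LinearMap.comp_apply, LinearMap.flip_apply] using
      LinearMap.congr_fun hmap y
  have jac : ∀ x y z : V, μ x (μ y z) + μ y (μ z x) + μ z (μ x y) = 0 := by
    intro x y z
    have hmap : (μ.flip (μ y z) + μ y ∘ₗ μ z + μ z ∘ₗ μ.flip y : V →ₗ[ℝ] V) = 0 := by
      apply b.ext
      intro i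
      simpa [LinearMap.add_apply, LinearMap.comp_apply, LinearMap.flip_apply] using stepy i y z
    simpa [LinearMap.add_apply, LinearMap.comp_apply, LinearMap.flip_apply] using
      LinearMap.congr_fun hmap x
  -- membership helpers
  set S : Submodule ℝ V := Submodule.span ℝ {b 0, b 2, b 5} with hS
  set I : Submodule ℝ V := Submodule.span ℝ {b 1, b 3, b 4} with hI
  have sb0 : b 0 ∈ S := Submodule.subset_span (by simp)
  have sb2 : b 2 ∈ S := Submodule.subset_span (by simp)
  have sb5 : b 5 ∈ S := Submodule.subset_span (by simp)
  have ib1 : b 1 ∈ I := Submodule.subset_span (by simp)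
  have ib3 : b 3 ∈ I := Submodule.subset_span (by simp)
  have ib4 : b 4 ∈ I := Submodule.subset_span (by simp)
  refine ⟨jac, ?_, ?_, ?_, ?_⟩
  · -- span{b0,b2,b5} is a subalgebra
    apply bil_span_aux μ _ _ S
    intro x hx y hy
    rcases hx with rfl | rfl | rfl <;> rcases hy with rfl | rfl | rfl <;>
      simp only [hdiag, h13, h16, h36, t20, t50, t52] <;>
      first
        | exact S.zero_mem
        | exact S.smul_mem _ sb0
        | exact S.smul_mem _ sb5
        | exact sb2
        | exact S.neg_mem (S.smul_mem _ sb0)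
        | exact S.neg_mem (S.smul_mem _ sb5)
        | exact S.neg_mem sb2
  · -- sl2 triple
    refine ⟨b 0, b 2, b 5, rfl, ?_, h36, h16⟩
    rw [t20]; module
  · -- span{b1,b3,b4} is an ideal
    intro x y hy
    have hx : x ∈ Submodule.span ℝ (Set.range b) := by
      rw [b.span_eq]; trivial
    refine bil_span_aux μ (Set.range b) _ I ?_ x hx y hy
    rintro _ ⟨i, rfl⟩ y hy
    rcases hy with rfl | rfl | rfl <;> fin_cases i <;>
      simp only [Fin.reduceFinMk, Fin.isValue, hdiag, h12, h23, h25, h34, h45, h24, h26, h14, h15, h35,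
        t10, t21, t31, t41, t51, t30, t32, t43, t53, t42, t54, neg_neg] <;>
      first
        | exact I.zero_mem
        | exact ib1
        | exact ib3
        | exact I.smul_mem _ ib1
        | exact I.smul_mem _ ib3
        | exact I.neg_mem ib1
        | exact I.neg_mem ib3
        | exact I.neg_mem (I.smul_mem _ ib1)
        | exact I.neg_mem (I.smul_mem _ ib3)
  · -- solvability: second derived bracket vanishes
    have hA : ∀ x1 ∈ I, ∀ x2 ∈ I, μ x1 x2 ∈ Submodule.span ℝ ({b 1, b 3} : Set V) := by
      apply bil_span_aux μ _ _ (Submodule.span ℝ ({b 1, b 3} : Set V))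
      have m1 : b 1 ∈ Submodule.span ℝ ({b 1, b 3} : Set V) := Submodule.subset_span (by simp)
      have m3 : b 3 ∈ Submodule.span ℝ ({b 1, b 3} : Set V) := Submodule.subset_span (by simp)
      intro x hx y hy
      rcases hx with rfl | rfl | rfl <;> rcases hy with rfl | rfl | rfl <;>
        simp only [hdiag, h24, h25, h45, t31, t41, t43] <;>
        first
          | exact Submodule.zero_mem _
          | exact Submodule.smul_mem _ _ m1
          | exact Submodule.smul_mem _ _ m3
          | exact Submodule.neg_mem _ (Submodule.smul_mem _ _ m1)
          | exact Submodule.neg_mem _ (Submodule.smul_mem _ _ m3)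
    have hB : ∀ u ∈ Submodule.span ℝ ({b 1, b 3} : Set V),
        ∀ v ∈ Submodule.span ℝ ({b 1, b 3} : Set V), μ u v ∈ (⊥ : Submodule ℝ V) := by
      apply bil_span_aux μ _ _ ⊥
      intro x hx y hy
      rcases hx with rfl | rfl <;> rcases hy with rfl | rfl <;>
        simp only [hdiag, h24, t31, Submodule.mem_bot]
    intro x1 hx1 x2 hx2 x3 hx3 x4 hx4
    simpa using hB _ (hA x1 hx1 x2 hx2) _ (hA x3 hx3 x4 hx4)
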